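/- Let G be a chordal graph with terminal set T ⊆ V(G), and let S be a minimal subset feedback vertex set of G with respect to T, i.e., S is a subset-FVS and no proper subset of S is a subset-FVS. Let v ∈ S be a simplicial vertex of G with v ∉ T. Then there is exactly one T-triangle Δ of G such that Δ ∩ S = {v}. -/

import Mathlib

open SimpleGraph

variable {V : Type*}

/-- A `T`-triangle, represented as its vertex set: three pairwise adjacent
vertices at least one of which is a terminal. -/
def IsTTriangle (G : SimpleGraph V) (T Δ : Set V) : Prop :=
  ∃ a b c : V, Δ = {a, b, c} ∧ G.Adj a b ∧ G.Adj a c ∧ G.Adj b c ∧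
    (a ∈ T ∨ b ∈ T ∨ c ∈ T)

/-- The induced subgraph `G − S` contains a `T`-triangle. -/
def HasTTriangleAvoiding (G : SimpleGraph V) (T S : Set V) : Prop :=
  ∃ Δ : Set V, IsTTriangle G T Δ ∧ Δ ∩ S = ∅

/-- The induced subgraph `G − S` contains a `T`-cycle: a cycle of `G` avoiding
`S` and passing through a vertex of `T`. -/
def HasTCycleAvoiding (G : SimpleGraph V) (T S : Set V) : Prop :=
  ∃ (v : V) (c : G.Walk v v), c.IsCycle ∧ (∀ x ∈ c.support, x ∉ S) ∧
    ∃ t ∈ T, t ∈ c.support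

/-- `S` is a subset feedback vertex set of `G` with respect to `T`:
`G − S` contains no `T`-cycle. -/
def IsSubsetFVS (G : SimpleGraph V) (T S : Set V) : Prop :=
  ¬ HasTCycleAvoiding G T S

/-- A cycle has a chord: an edge of `G` between two vertices of the cycle
which is not an edge of the cycle. -/
def WalkHasChord (G : SimpleGraph V) {v : V} (c : G.Walk v v) : Prop :=
  ∃ x y : V, x ∈ c.support ∧ y ∈ c.support ∧ G.Adj x y ∧ s(x, y) ∉ c.edges

/-- A graph is chordal if every cycle of length at least four has a chord. -/
def Chordal (G : SimpleGraph V) : Prop :=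
  ∀ (v : V) (c : G.Walk v v), c.IsCycle → 4 ≤ c.length → WalkHasChord G c

/-- A bridge: an edge lying on no cycle of the graph. -/
def IsBridgeEdge (G : SimpleGraph V) (e : Sym2 V) : Prop :=
  e ∈ G.edgeSet ∧ ∀ (v : V) (c : G.Walk v v), c.IsCycle → e ∉ c.edges

/-- `(K, I)` is a split partition of `G`: `K` is a clique, `I` an independent
set, and they partition the vertex set. -/
def IsSplitPartition (G : SimpleGraph V) (K I : Set V) : Prop :=
  K ∪ I = Set.univ ∧ K ∩ I = ∅ ∧ G.IsClique K ∧ I.Pairwise fun a b => ¬ G.Adj a b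

/-- The closed neighbourhood `N[v]` of a vertex. -/
def closedNbhd (G : SimpleGraph V) (v : V) : Set V := insert v (G.neighborSet v)

/-- A vertex is simplicial if its closed neighbourhood is a clique. -/
def IsSimplicial (G : SimpleGraph V) (v : V) : Prop := G.IsClique (closedNbhd G v)

/-- A maximal clique. -/
def IsMaxClique (G : SimpleGraph V) (C : Set V) : Prop :=
  G.IsClique C ∧ ∀ C' : Set V, G.IsClique C' → C ⊆ C' → C' = C

/-- A matching, as a set of edges of `G` no two of which share an endvertex. -/
def IsEdgeMatching (G : SimpleGraph V) (M : Set (Sym2 V)) : Prop :=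
  M ⊆ G.edgeSet ∧ ∀ e ∈ M, ∀ f ∈ M, e ≠ f → ∀ z : V, z ∈ e → z ∉ f

/-- A set of edges saturates a vertex if some edge of it is incident with it. -/
def Saturates (M : Set (Sym2 V)) (z : V) : Prop := ∃ e ∈ M, z ∈ e

/-- `M` is a `t`-expansion of `X` into `Y`: every edge of `M` goes between `X`
and `Y`, every vertex of `X` is incident with exactly `t` edges of `M`, and the
edges of `M` are incident with exactly `t * |X|` distinct vertices of `Y`. -/
def IsExpansion (G : SimpleGraph V) (t : ℕ) (X Y : Set V) (M : Set (Sym2 V)) : Prop :=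
  M ⊆ G.edgeSet ∧ (∀ e ∈ M, ∃ x ∈ X, ∃ y ∈ Y, e = s(x, y)) ∧
    (∀ x ∈ X, {e ∈ M | x ∈ e}.ncard = t) ∧
    {y ∈ Y | Saturates M y}.ncard = t * X.ncard

section Aux

variable {G : SimpleGraph V} {T S : Set V}

lemma tri_to_cycle {a b c : V} (hab : G.Adj a b) (hac : G.Adj a c) (hbc : G.Adj b c)
    (ha : a ∉ S) (hb : b ∉ S) (hc : c ∉ S) (ht : a ∈ T ∨ b ∈ T ∨ c ∈ T) :
    HasTCycleAvoiding G T S := by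
  refine ⟨a, Walk.cons hab (Walk.cons hbc (Walk.cons hac.symm Walk.nil)), ?_, ?_, ?_⟩
  · rw [Walk.cons_isCycle_iff]
    refine ⟨?_, ?_⟩
    · rw [Walk.cons_isPath_iff]
      refine ⟨by simp [Walk.isPath_def, hac.ne'], by simp [hbc.ne, hab.ne']⟩
    · intro h
      simp only [Walk.edges_cons, Walk.edges_nil, List.mem_cons, List.not_mem_nil, or_false,
        Sym2.eq_iff] at h
      rcases h with (⟨h1, h2⟩ | ⟨h1, h2⟩) | (⟨h1, h2⟩ | ⟨h1, h2⟩)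
      exacts [hab.ne h1, hac.ne h1, hac.ne h1, hbc.ne h2]
  · intro x hx
    simp only [Walk.support_cons, Walk.support_nil, List.mem_cons, List.not_mem_nil,
      or_false] at hx
    rcases hx with rfl | rfl | rfl | rfl <;> assumption
  · rcases ht with h | h | h
    exacts [⟨a, h, by simp⟩, ⟨b, h, by simp⟩, ⟨c, h, by simp⟩]

lemma mem_tail_of_closed {u : V} (c : G.Walk u u) (hc : c ≠ Walk.nil) :
    u ∈ c.support.tail := by
  cases c with
  | nil => exact absurd rfl hc
  | cons h p => simpa using p.end_mem_support

lemma mem_support_closed_iff {u : V} (c : G.Walk u u) (hc : c ≠ Walk.nil) (x : V) :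
    x ∈ c.support ↔ x ∈ c.support.tail := by
  rw [Walk.mem_support_iff]
  constructor
  · rintro (rfl | h)
    · exact mem_tail_of_closed c hc
    · exact h
  · exact Or.inr

lemma exists_tri (hS : IsSubsetFVS G T S) {v : V} (hvS : v ∈ S) (hvT : v ∉ T)
    (hsimp : IsSimplicial G v) (hC : HasTCycleAvoiding G T (S \ {v})) :
    ∃ Δ : Set V, IsTTriangle G T Δ ∧ Δ ∩ S = {v} := by
  classical
  obtain ⟨u, c, hcyc, havoid, t, htT, htc⟩ := hC
  have hv : v ∈ c.support := by
    by_contra h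
    refine hS ⟨u, c, hcyc, fun x hx hxS => ?_, t, htT, htc⟩
    refine havoid x hx ⟨hxS, ?_⟩
    rintro rfl
    exact h hx
  have hcyc₀ := hcyc.rotate hv
  have hsupp₀ : ∀ x, x ∈ (c.rotate v hv).support ↔ x ∈ c.support := by
    intro x
    rw [mem_support_closed_iff _ hcyc₀.ne_nil, mem_support_closed_iff _ hcyc.ne_nil]
    exact (Walk.support_rotate c v hv).mem_iff
  cases hh : c.rotate v hv with
  | nil => exact absurd hh hcyc₀.ne_nil
  | cons hva p =>
    rename_i a
    rw [hh] at hcyc₀ hsupp₀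
    rw [Walk.cons_isCycle_iff] at hcyc₀
    obtain ⟨hpp, _⟩ := hcyc₀
    obtain ⟨b, hvb, r, hr⟩ := Walk.exists_eq_cons_of_ne hva.ne p.reverse
    have hpr := hpp.reverse
    rw [hr, Walk.cons_isPath_iff] at hpr
    obtain ⟨hrp, hvr⟩ := hpr
    have hps : ∀ x, x ∈ p.support ↔ x = v ∨ x ∈ r.support := by
      intro x
      have h1 : p.support.reverse = v :: r.support := by
        rw [← Walk.support_reverse, hr, Walk.support_cons]
      rw [← List.mem_reverse, h1]
      simp
    have hab : G.Adj a b := by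
      have hane : a ≠ b := by
        rintro rfl
        have : r = Walk.nil := (Walk.isPath_iff_eq_nil (p := r)).mp hrp
        have hl : p.length = 1 := by
          rw [← Walk.length_reverse, hr, this]
          simp
        have := hcyc.rotate hv |>.three_le_length
        rw [hh] at this
        simp [hl] at this
      exact hsimp (Set.mem_insert_of_mem _ (show a ∈ G.neighborSet v from hva)) (Set.mem_insert_of_mem _ (show b ∈ G.neighborSet v from hvb)) hane
    have hrS : ∀ x ∈ r.support, x ∉ S := by
      intro x hx hxS
      have hxc : x ∈ c.support := by
        rw [← hsupp₀, Walk.support_cons]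
        exact List.mem_cons_of_mem _ ((hps x).mpr (Or.inr hx))
      refine havoid x hxc ⟨hxS, ?_⟩
      rintro rfl
      exact hvr hx
    have haS : a ∉ S := hrS a r.end_mem_support
    have hbS : b ∉ S := hrS b r.start_mem_support
    have htv : t ≠ v := fun h => hvT (h ▸ htT)
    have htr : t ∈ r.support := by
      have : t ∈ (Walk.cons hva p).support := (hsupp₀ t).mpr htc
      rw [Walk.support_cons, List.mem_cons] at this
      rcases this with h | h
      · exact absurd (by simpa using h) htv
      · rcases (hps t).mp h with h' | h'
        · exact absurd h' htv
        · exact h'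
    by_cases hedge : s(a, b) ∈ r.edges
    · -- the cycle is a triangle v a b
      have hrsup : r.support = [b, a] := by
        obtain ⟨x, hbx, r', hr'⟩ := Walk.exists_eq_cons_of_ne hab.ne' r
        rw [hr'] at hedge
        rw [Walk.edges_cons, List.mem_cons] at hedge
        rw [hr', Walk.cons_isPath_iff] at hrp
        rcases hedge with h | h
        · rw [Sym2.eq_iff] at h
          rcases h with ⟨h1, _⟩ | ⟨h1, _⟩
          · exact absurd h1 hab.ne
          · subst h1
            have : r' = Walk.nil := (Walk.isPath_iff_eq_nil (p := r')).mp hrp.1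
            rw [hr', this]
            simp
        · rw [Sym2.eq_swap] at h
          exact absurd (Walk.fst_mem_support_of_mem_edges r' h) hrp.2
      have htab : t = b ∨ t = a := by
        rw [hrsup] at htr; simpa using htr
      refine ⟨{v, a, b}, ⟨v, a, b, rfl, hva, hvb, hab, ?_⟩, ?_⟩
      · rcases htab with rfl | rfl
        · exact Or.inr (Or.inr htT)
        · exact Or.inr (Or.inl htT)
      · ext x
        simp only [Set.mem_inter_iff, Set.mem_insert_iff, Set.mem_singleton_iff]
        constructor
        · rintro ⟨rfl | rfl | rfl, hxS⟩
          · rfl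
          · exact absurd hxS haS
          · exact absurd hxS hbS
        · rintro rfl
          exact ⟨Or.inl rfl, hvS⟩
    · -- shortcut past v : contradiction
      exact absurd (⟨a, Walk.cons hab r, (Walk.cons_isCycle_iff r hab).mpr ⟨hrp, hedge⟩,
        by
          intro x hx
          rw [Walk.support_cons, List.mem_cons] at hx
          rcases hx with rfl | hx
          · exact haS
          · exact hrS x hx,
        ⟨t, htT, by rw [Walk.support_cons]; exact List.mem_cons_of_mem _ htr⟩⟩ :
          HasTCycleAvoiding G T S) hS

end Aux

section Uniq

variable {G : SimpleGraph V} {T S : Set V}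

lemma norm_tri {v : V} (hvT : v ∉ T) {Δ : Set V} (h : IsTTriangle G T Δ)
    (hI : Δ ∩ S = {v}) :
    ∃ x y : V, Δ = {v, x, y} ∧ G.Adj v x ∧ G.Adj v y ∧ G.Adj x y ∧
      (x ∈ T ∨ y ∈ T) ∧ x ∉ S ∧ y ∉ S := by
  obtain ⟨a, b, c, rfl, hab, hac, hbc, ht⟩ := h
  have honly : ∀ x ∈ ({a, b, c} : Set V), x ∈ S → x = v := by
    intro x hx hxS
    have : x ∈ ({a, b, c} : Set V) ∩ S := ⟨hx, hxS⟩
    rw [hI] at this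
    exact this
  have hvmem : v ∈ ({a, b, c} : Set V) := by
    have : v ∈ ({a, b, c} : Set V) ∩ S := by rw [hI]; rfl
    exact this.1
  have hnS : ∀ x ∈ ({a, b, c} : Set V), x ≠ v → x ∉ S := fun x hx hxv hxS =>
    hxv (honly x hx hxS)
  rcases hvmem with rfl | rfl | rfl
  · refine ⟨b, c, rfl, hab, hac, hbc, ?_, ?_, ?_⟩
    · rcases ht with h | h | h
      exacts [absurd h hvT, Or.inl h, Or.inr h]
    · exact hnS b (by simp) hab.ne'
    · exact hnS c (by simp) hac.ne'
  · refine ⟨a, c, ?_, hab.symm, hbc, hac, ?_, ?_, ?_⟩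
    · rw [Set.insert_comm]
    · rcases ht with h | h | h
      exacts [Or.inl h, absurd h hvT, Or.inr h]
    · exact hnS a (by simp) hab.ne
    · exact hnS c (by simp) hbc.ne'
  · refine ⟨a, b, ?_, hac.symm, hbc.symm, hab, ?_, ?_, ?_⟩
    · ext x; simp; tauto
    · rcases ht with h | h | h
      exacts [Or.inl h, Or.inr h, absurd h hvT]
    · exact hnS a (by simp) hac.ne
    · exact hnS b (by simp) hbc.ne

lemma uniq_tri (hS : IsSubsetFVS G T S) {v : V} (hvT : v ∉ T)
    (hsimp : IsSimplicial G v) {Δ₁ Δ₂ : Set V}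
    (h1 : IsTTriangle G T Δ₁ ∧ Δ₁ ∩ S = {v})
    (h2 : IsTTriangle G T Δ₂ ∧ Δ₂ ∩ S = {v}) : Δ₁ = Δ₂ := by
  obtain ⟨x₁, y₁, rfl, hvx₁, hvy₁, hxy₁, ht₁, hx₁S, hy₁S⟩ := norm_tri hvT h1.1 h1.2
  obtain ⟨x₂, y₂, rfl, hvx₂, hvy₂, hxy₂, ht₂, hx₂S, hy₂S⟩ := norm_tri hvT h2.1 h2.2
  by_contra hne
  have hadj : ∀ z w : V, G.Adj v z → G.Adj v w → z ≠ w → G.Adj z w := fun z w hz hw hzw =>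
    hsimp (Set.mem_insert_of_mem _ (show z ∈ G.neighborSet v from hz))
      (Set.mem_insert_of_mem _ (show w ∈ G.neighborSet v from hw)) hzw
  have hw : ∃ w : V, G.Adj v w ∧ w ∉ S ∧ w ≠ x₁ ∧ w ≠ y₁ := by
    by_contra hcon
    push_neg at hcon
    have h2x : x₂ = x₁ ∨ x₂ = y₁ := by
      by_cases h : x₂ = x₁
      · exact Or.inl h
      · exact Or.inr (hcon x₂ hvx₂ hx₂S h)
    have h2y : y₂ = x₁ ∨ y₂ = y₁ := by
      by_cases h : y₂ = x₁
      · exact Or.inl h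
      · exact Or.inr (hcon y₂ hvy₂ hy₂S h)
    rcases h2x with rfl | rfl <;> rcases h2y with rfl | rfl
    · exact hxy₂.ne rfl
    · exact hne rfl
    · exact hne (by rw [Set.pair_comm y₂ x₂])
    · exact hxy₂.ne rfl
  obtain ⟨w, hvw, hwS, hwx, hwy⟩ := hw
  exact hS (tri_to_cycle hxy₁ (hadj x₁ w hvx₁ hvw hwx.symm)
    (hadj y₁ w hvy₁ hvw hwy.symm) hx₁S hy₁S hwS (ht₁.imp id Or.inl))

end Uniq

/-- a non-terminal simplicial vertex of a minimal subset-FVS is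
the sole solution vertex of a unique `T`-triangle. -/
theorem stmt13 {V : Type} [Fintype V] (G : SimpleGraph V) (T : Set V)
    (hG : Chordal G) (S : Set V)
    (hS : IsSubsetFVS G T S)
    (hmin : ∀ S' : Set V, S' ⊂ S → ¬ IsSubsetFVS G T S')
    (v : V) (hvS : v ∈ S) (hvT : v ∉ T)
    (hsimp : IsSimplicial G v) :
    ∃! Δ : Set V, IsTTriangle G T Δ ∧ Δ ∩ S = {v} := by
  have hC : HasTCycleAvoiding G T (S \ {v}) := by
    by_contra h
    exact hmin (S \ {v}) (Set.sdiff_singleton_ssubset.mpr hvS) h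
  obtain ⟨Δ, hΔ⟩ := exists_tri hS hvS hvT hsimp hC
  exact ⟨Δ, hΔ, fun Δ' hΔ' => uniq_tri hS hvT hsimp hΔ' hΔ⟩
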